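/- For any matrix M ∈ ℝ^{d₁×d₂}, the trace norm (sum of singular values) divided by √(d₁d₂) is at most the max-norm of M, where the max-norm is the infimum over factorizations M = U Vᵀ of ‖U‖_{2,∞}·‖V‖_{2,∞} (maximum ℓ₂ row norms). -/

import Mathlib

open scoped BigOperators

/-- Maximum ℓ₂ row norm of a matrix (the ‖·‖_{2,∞} operator norm). -/
noncomputable def rowNormMax {m k : ℕ} (U : Matrix (Fin m) (Fin k) ℝ) : ℝ :=
  ⨆ i, Real.sqrt (∑ l, (U i l) ^ 2)

/-- The max-norm: infimum over factorizations M = U Vᵀ of ‖U‖_{2,∞}‖V‖_{2,∞}. -/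
noncomputable def maxNorm {d1 d2 : ℕ} (M : Matrix (Fin d1) (Fin d2) ℝ) : ℝ :=
  sInf { x | ∃ (k : ℕ) (U : Matrix (Fin d1) (Fin k) ℝ) (V : Matrix (Fin d2) (Fin k) ℝ),
    M = U * V.transpose ∧ x = rowNormMax U * rowNormMax V }

/-- Elementwise sup-norm ‖M‖_∞. -/
noncomputable def supNorm {d1 d2 : ℕ} (M : Matrix (Fin d1) (Fin d2) ℝ) : ℝ :=
  ⨆ i, ⨆ j, |M i j|

/-- Frobenius norm. -/
noncomputable def frobNorm {d1 d2 : ℕ} (M : Matrix (Fin d1) (Fin d2) ℝ) : ℝ :=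
  Real.sqrt (∑ i, ∑ j, (M i j) ^ 2)

/-- Trace norm: the sum of the singular values of M, i.e. of the square roots of the
eigenvalues of MᵀM. -/
noncomputable def traceNorm {d1 d2 : ℕ} (M : Matrix (Fin d1) (Fin d2) ℝ) : ℝ :=
  ∑ i, Real.sqrt ((Matrix.isHermitian_conjTranspose_mul_self M).eigenvalues i)

/- ### Auxiliary machinery -/

/-- Reinterpret a plain vector as an element of Euclidean space. -/
noncomputable def toE {n : ℕ} (v : Fin n → ℝ) : EuclideanSpace ℝ (Fin n) := WithLp.toLp 2 v

@[simp] lemma toE_apply {n : ℕ} (v : Fin n → ℝ) (i : Fin n) : toE v i = v i := rfl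

lemma inner_mulVec_eq {m n : ℕ} (A : Matrix (Fin m) (Fin n) ℝ)
    (x : EuclideanSpace ℝ (Fin m)) (y : EuclideanSpace ℝ (Fin n)) :
    (inner ℝ x (toE (A.mulVec y)) : ℝ) = inner ℝ (toE (A.transpose.mulVec x)) y := by
  simp only [PiLp.inner_apply, RCLike.inner_apply, conj_trivial, toE_apply, Matrix.mulVec,
    dotProduct, Matrix.transpose_apply, Finset.sum_mul, Finset.mul_sum]
  rw [Finset.sum_comm]
  exact Finset.sum_congr rfl fun _ _ => Finset.sum_congr rfl fun _ _ => by ring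

lemma norm_sq_eq_sum {n : ℕ} (x : EuclideanSpace ℝ (Fin n)) : ‖x‖ ^ 2 = ∑ i, x i ^ 2 := by
  rw [EuclideanSpace.norm_eq, Real.sq_sqrt (by positivity)]
  simp [sq_abs]

lemma rowNormMax_nonneg {m k : ℕ} (U : Matrix (Fin m) (Fin k) ℝ) : 0 ≤ rowNormMax U :=
  Real.iSup_nonneg fun _ => Real.sqrt_nonneg _

lemma frobNorm_nonneg {m k : ℕ} (U : Matrix (Fin m) (Fin k) ℝ) : 0 ≤ frobNorm U :=
  Real.sqrt_nonneg _

lemma frobNorm_le {m k : ℕ} (U : Matrix (Fin m) (Fin k) ℝ) :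
    frobNorm U ≤ Real.sqrt m * rowNormMax U := by
  have h1 : ∀ i : Fin m, Real.sqrt (∑ l, (U i l) ^ 2) ≤ rowNormMax U := fun i =>
    le_ciSup (f := fun i => Real.sqrt (∑ l, (U i l) ^ 2)) (Set.Finite.bddAbove (Set.finite_range _)) i
  have h2 : ∀ i : Fin m, ∑ l, (U i l) ^ 2 ≤ rowNormMax U ^ 2 := by
    intro i
    have h := h1 i
    nlinarith [Real.sq_sqrt (show (0:ℝ) ≤ ∑ l, (U i l) ^ 2 by positivity),
      Real.sqrt_nonneg (∑ l, (U i l) ^ 2)]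
  have : frobNorm U ≤ Real.sqrt ((m : ℝ) * rowNormMax U ^ 2) := by
    apply Real.sqrt_le_sqrt
    calc ∑ i, ∑ l, (U i l) ^ 2 ≤ ∑ _i : Fin m, rowNormMax U ^ 2 :=
          Finset.sum_le_sum fun i _ => h2 i
      _ = (m : ℝ) * rowNormMax U ^ 2 := by simp [Finset.sum_const, mul_comm]
  calc frobNorm U ≤ Real.sqrt ((m : ℝ) * rowNormMax U ^ 2) := this
    _ = Real.sqrt m * rowNormMax U := by
        rw [Real.sqrt_mul (by positivity), Real.sqrt_sq (rowNormMax_nonneg U)]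

/-- Parseval for an orthonormal basis of Euclidean space, real case. -/
lemma parseval_sum {n : ℕ} (b : OrthonormalBasis (Fin n) ℝ (EuclideanSpace ℝ (Fin n)))
    (x : EuclideanSpace ℝ (Fin n)) : ∑ i, (inner ℝ x (b i) : ℝ) ^ 2 = ‖x‖ ^ 2 := by
  have h := b.sum_inner_mul_inner x x
  have h2 : ∀ i, (inner ℝ x (b i) : ℝ) * inner ℝ (b i) x = (inner ℝ x (b i) : ℝ) ^ 2 := by
    intro i; rw [real_inner_comm (b i) x]; ring
  rw [← real_inner_self_eq_norm_sq, ← h]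
  exact Finset.sum_congr rfl fun i _ => (h2 i).symm

/-- Columns of a matrix as Euclidean vectors. -/
noncomputable def colE {m k : ℕ} (U : Matrix (Fin m) (Fin k) ℝ) (l : Fin k) :
    EuclideanSpace ℝ (Fin m) := toE (fun j => U j l)

lemma norm_transpose_mulVec_sq {m k : ℕ} (U : Matrix (Fin m) (Fin k) ℝ)
    (x : EuclideanSpace ℝ (Fin m)) :
    ‖toE (U.transpose.mulVec x)‖ ^ 2 = ∑ l, (inner ℝ (colE U l) x : ℝ) ^ 2 := by
  rw [norm_sq_eq_sum]
  refine Finset.sum_congr rfl fun l _ => ?_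
  have h : (toE (U.transpose.mulVec x)) l = inner ℝ (colE U l) x := by
    simp [Matrix.mulVec, dotProduct, colE, PiLp.inner_apply]
    exact Finset.sum_congr rfl fun _ _ => mul_comm _ _
  rw [h]

lemma sum_sq_colE {m k : ℕ} (U : Matrix (Fin m) (Fin k) ℝ) :
    ∑ l, ‖colE U l‖ ^ 2 = frobNorm U ^ 2 := by
  rw [frobNorm, Real.sq_sqrt (by positivity), Finset.sum_comm]
  refine Finset.sum_congr rfl fun l _ => ?_
  rw [norm_sq_eq_sum]
  rfl

/-- Bessel-type inequality for a family of pairwise-orthogonal vectors each of norm 0 or 1. -/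
lemma bessel_sum {d1 n : ℕ} (p : Fin n → EuclideanSpace ℝ (Fin d1))
    (hp1 : ∀ i, p i = 0 ∨ ‖p i‖ = 1)
    (hp2 : ∀ i j, i ≠ j → (inner ℝ (p i) (p j) : ℝ) = 0)
    (x : EuclideanSpace ℝ (Fin d1)) :
    ∑ i, (inner ℝ (p i) x : ℝ) ^ 2 ≤ ‖x‖ ^ 2 := by
  classical
  set P : Fin n → Prop := fun i => p i ≠ 0 with hP
  have horth : Orthonormal ℝ (fun i : Subtype P => p i.1) := by
    constructor
    · intro i
      rcases hp1 i.1 with h | h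
      · exact absurd h i.2
      · exact h
    · intro i j hij
      exact hp2 i.1 j.1 fun h => hij (Subtype.ext h)
  have hbes := horth.sum_inner_products_le (𝕜 := ℝ) (s := Finset.univ) x
  have h1 : ∑ i, (inner ℝ (p i) x : ℝ) ^ 2
      = ∑ i ∈ Finset.univ.filter P, (inner ℝ (p i) x : ℝ) ^ 2 := by
    refine (Finset.sum_filter_of_ne fun i _ h => ?_).symm
    intro h0
    apply h
    simp [h0]
  have h2 : ∑ i ∈ Finset.univ.filter P, (inner ℝ (p i) x : ℝ) ^ 2
      = ∑ i : Subtype P, (inner ℝ (p i.1) x : ℝ) ^ 2 := by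
    refine Finset.sum_subtype _ (fun i => ?_) _
    simp [hP]
  rw [h1, h2]
  calc ∑ i : Subtype P, (inner ℝ (p i.1) x : ℝ) ^ 2
      = ∑ i : Subtype P, ‖(inner ℝ (p i.1) x : ℝ)‖ ^ 2 := by
        refine Finset.sum_congr rfl fun i _ => ?_
        rw [Real.norm_eq_abs, sq_abs]
    _ ≤ ‖x‖ ^ 2 := hbes

/-- Cauchy–Schwarz for sums of nonnegative reals. -/
lemma sum_mul_le_sqrt_mul_sqrt {n : ℕ} (f g : Fin n → ℝ) (hf : ∀ i, 0 ≤ f i)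
    (hg : ∀ i, 0 ≤ g i) :
    ∑ i, f i * g i ≤ Real.sqrt (∑ i, f i ^ 2) * Real.sqrt (∑ i, g i ^ 2) := by
  have h := Finset.sum_mul_sq_le_sq_mul_sq Finset.univ f g
  have h1 : (0:ℝ) ≤ ∑ i, f i * g i :=
    Finset.sum_nonneg fun i _ => mul_nonneg (hf i) (hg i)
  rw [← Real.sqrt_mul (by positivity)]
  rw [Real.le_sqrt h1 (by positivity)]
  exact h

/-- Key inequality, generic form: for any orthonormal basis `b` whose images under `M = U Vᵀ`
are pairwise orthogonal, the sum of the norms of the images is at most `‖U‖_F ‖V‖_F`. -/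
lemma sum_norm_mulVec_le {d1 d2 k : ℕ} (U : Matrix (Fin d1) (Fin k) ℝ)
    (V : Matrix (Fin d2) (Fin k) ℝ)
    (b : OrthonormalBasis (Fin d2) ℝ (EuclideanSpace ℝ (Fin d2)))
    (horth : ∀ i j, i ≠ j →
      (inner ℝ (toE ((U * V.transpose).mulVec (b i))) (toE ((U * V.transpose).mulVec (b j))) : ℝ) = 0) :
    ∑ i, ‖toE ((U * V.transpose).mulVec (b i))‖ ≤ frobNorm U * frobNorm V := by
  classical
  set Mq : Fin d2 → EuclideanSpace ℝ (Fin d1) :=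
    fun i => toE ((U * V.transpose).mulVec (b i)) with hMq
  set p : Fin d2 → EuclideanSpace ℝ (Fin d1) := fun i => ‖Mq i‖⁻¹ • Mq i with hp
  set w : Fin d2 → EuclideanSpace ℝ (Fin k) :=
    fun i => toE (V.transpose.mulVec (b i)) with hw
  have hp1 : ∀ i, p i = 0 ∨ ‖p i‖ = 1 := by
    intro i
    by_cases h : Mq i = 0
    · left; simp [hp, h]
    · right
      rw [hp]
      simp only [norm_smul, norm_inv, norm_norm]
      exact inv_mul_cancel₀ (norm_ne_zero_iff.mpr h)
  have hp2 : ∀ i j, i ≠ j → (inner ℝ (p i) (p j) : ℝ) = 0 := by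
    intro i j hij
    rw [hp]
    simp only [real_inner_smul_left, real_inner_smul_right]
    rw [horth i j hij]
    ring
  have hnorm : ∀ i, ‖Mq i‖ = inner ℝ (p i) (Mq i) := by
    intro i
    by_cases h : Mq i = 0
    · simp [hp, h]
    · rw [hp]
      simp only [real_inner_smul_left]
      rw [real_inner_self_eq_norm_sq, sq, ← mul_assoc,
        inv_mul_cancel₀ (norm_ne_zero_iff.mpr h), one_mul]
  have hfac : ∀ i, (inner ℝ (p i) (Mq i) : ℝ) = inner ℝ (toE (U.transpose.mulVec (p i))) (w i) := by
    intro i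
    have e1 : Mq i = toE (U.mulVec (w i)) := by
      rw [hMq, hw]
      simp only [toE]
      rw [Matrix.mulVec_mulVec]
    calc (inner ℝ (p i) (Mq i) : ℝ) = inner ℝ (p i) (toE (U.mulVec (w i))) := by rw [← e1]
      _ = inner ℝ (toE (U.transpose.mulVec (p i))) (w i) := inner_mulVec_eq U (p i) (w i)
  have hCS : ∑ i, ‖toE (U.transpose.mulVec (p i))‖ * ‖w i‖
      ≤ Real.sqrt (∑ i, ‖toE (U.transpose.mulVec (p i))‖ ^ 2) * Real.sqrt (∑ i, ‖w i‖ ^ 2) :=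
    sum_mul_le_sqrt_mul_sqrt _ _ (fun i => norm_nonneg _) (fun i => norm_nonneg _)
  have hU : ∑ i, ‖toE (U.transpose.mulVec (p i))‖ ^ 2 ≤ frobNorm U ^ 2 := by
    calc ∑ i, ‖toE (U.transpose.mulVec (p i))‖ ^ 2
        = ∑ i, ∑ l, (inner ℝ (colE U l) (p i) : ℝ) ^ 2 :=
          Finset.sum_congr rfl fun i _ => norm_transpose_mulVec_sq U (p i)
      _ = ∑ l, ∑ i, (inner ℝ (colE U l) (p i) : ℝ) ^ 2 := Finset.sum_comm
      _ ≤ ∑ l, ‖colE U l‖ ^ 2 := by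
          refine Finset.sum_le_sum fun l _ => ?_
          have := bessel_sum p hp1 hp2 (colE U l)
          calc ∑ i, (inner ℝ (colE U l) (p i) : ℝ) ^ 2
              = ∑ i, (inner ℝ (p i) (colE U l) : ℝ) ^ 2 :=
                Finset.sum_congr rfl fun i _ => by rw [real_inner_comm]
            _ ≤ ‖colE U l‖ ^ 2 := this
      _ = frobNorm U ^ 2 := sum_sq_colE U
  have hV : ∑ i, ‖w i‖ ^ 2 = frobNorm V ^ 2 := by
    calc ∑ i, ‖w i‖ ^ 2
        = ∑ i, ∑ l, (inner ℝ (colE V l) (b i) : ℝ) ^ 2 := by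
          refine Finset.sum_congr rfl fun i _ => ?_
          rw [hw]
          exact norm_transpose_mulVec_sq V (b i)
      _ = ∑ l, ∑ i, (inner ℝ (colE V l) (b i) : ℝ) ^ 2 := Finset.sum_comm
      _ = ∑ l, ‖colE V l‖ ^ 2 := Finset.sum_congr rfl fun l _ => parseval_sum b (colE V l)
      _ = frobNorm V ^ 2 := sum_sq_colE V
  calc ∑ i, ‖Mq i‖ = ∑ i, (inner ℝ (toE (U.transpose.mulVec (p i))) (w i) : ℝ) :=
        Finset.sum_congr rfl fun i _ => (hnorm i).trans (hfac i)
    _ ≤ ∑ i, ‖toE (U.transpose.mulVec (p i))‖ * ‖w i‖ :=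
        Finset.sum_le_sum fun i _ => real_inner_le_norm _ _
    _ ≤ Real.sqrt (∑ i, ‖toE (U.transpose.mulVec (p i))‖ ^ 2) * Real.sqrt (∑ i, ‖w i‖ ^ 2) := hCS
    _ ≤ frobNorm U * frobNorm V := by
        apply mul_le_mul
        · calc Real.sqrt (∑ i, ‖toE (U.transpose.mulVec (p i))‖ ^ 2)
              ≤ Real.sqrt (frobNorm U ^ 2) := Real.sqrt_le_sqrt hU
            _ = frobNorm U := Real.sqrt_sq (frobNorm_nonneg U)
        · rw [hV, Real.sqrt_sq (frobNorm_nonneg V)]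
        · exact Real.sqrt_nonneg _
        · exact frobNorm_nonneg U

/-- Key inequality: the trace norm of `U * Vᵀ` is at most `‖U‖_F ‖V‖_F`. -/
lemma traceNorm_le_frob_mul {d1 d2 k : ℕ} (U : Matrix (Fin d1) (Fin k) ℝ)
    (V : Matrix (Fin d2) (Fin k) ℝ) :
    traceNorm (U * V.transpose) ≤ frobNorm U * frobNorm V := by
  classical
  have hA : ((U * V.transpose).transpose * (U * V.transpose)).IsHermitian :=
    Matrix.isHermitian_conjTranspose_mul_self (U * V.transpose)
  set b := hA.eigenvectorBasis with hb
  set lam : Fin d2 → ℝ := hA.eigenvalues with hlam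
  have key : ∀ i j, (inner ℝ (toE ((U * V.transpose).mulVec (b i)))
      (toE ((U * V.transpose).mulVec (b j))) : ℝ) = lam i * inner ℝ (b i) (b j) := by
    intro i j
    rw [inner_mulVec_eq (U * V.transpose) (toE ((U * V.transpose).mulVec (b i))) (b j)]
    have e2 : (U * V.transpose).transpose.mulVec (toE ((U * V.transpose).mulVec (b i)))
        = lam i • (b i : EuclideanSpace ℝ (Fin d2)) := by
      show (U * V.transpose).transpose.mulVec ((U * V.transpose).mulVec (b i)) = _
      rw [Matrix.mulVec_mulVec]
      exact hA.mulVec_eigenvectorBasis i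
    rw [e2]
    have e3 : toE (lam i • (b i).ofLp) = lam i • b i := rfl
    rw [e3, real_inner_smul_left]
  have hnn : ∀ i, ‖toE ((U * V.transpose).mulVec (b i))‖ ^ 2 = lam i := by
    intro i
    rw [← real_inner_self_eq_norm_sq, key i i]
    have : (inner ℝ (b i) (b i) : ℝ) = 1 := by
      rw [real_inner_self_eq_norm_sq, b.orthonormal.1 i]
      norm_num
    rw [this, mul_one]
  have horth : ∀ i j, i ≠ j →
      (inner ℝ (toE ((U * V.transpose).mulVec (b i))) (toE ((U * V.transpose).mulVec (b j))) : ℝ)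
        = 0 := by
    intro i j hij
    rw [key i j, b.orthonormal.2 hij, mul_zero]
  have htr : traceNorm (U * V.transpose) = ∑ i, ‖toE ((U * V.transpose).mulVec (b i))‖ := by
    rw [traceNorm]
    refine Finset.sum_congr rfl fun i _ => ?_
    rw [← Real.sqrt_sq (norm_nonneg (toE ((U * V.transpose).mulVec (b i))))]
    congr 1
    exact (hnn i).symm
  rw [htr]
  exact sum_norm_mulVec_le U V b horth

/-- ‖M‖_*/√(d₁d₂) ≤ ‖M‖_max. -/
theorem traceNorm_div_le_maxNorm {d1 d2 : ℕ} (M : Matrix (Fin d1) (Fin d2) ℝ) :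
    traceNorm M / Real.sqrt ((d1 : ℝ) * d2) ≤ maxNorm M := by
  have hSne : { x | ∃ (k : ℕ) (U : Matrix (Fin d1) (Fin k) ℝ) (V : Matrix (Fin d2) (Fin k) ℝ),
      M = U * V.transpose ∧ x = rowNormMax U * rowNormMax V }.Nonempty :=
    ⟨rowNormMax M * rowNormMax (1 : Matrix (Fin d2) (Fin d2) ℝ), d2, M, 1, by simp, rfl⟩
  refine le_csInf hSne ?_
  rintro x ⟨k, U, V, rfl, rfl⟩
  have key : traceNorm (U * V.transpose) ≤
      Real.sqrt ((d1 : ℝ) * d2) * (rowNormMax U * rowNormMax V) := by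
    calc traceNorm (U * V.transpose) ≤ frobNorm U * frobNorm V := traceNorm_le_frob_mul U V
      _ ≤ (Real.sqrt d1 * rowNormMax U) * (Real.sqrt d2 * rowNormMax V) := by
          exact mul_le_mul (frobNorm_le U) (frobNorm_le V) (frobNorm_nonneg V)
            (mul_nonneg (Real.sqrt_nonneg _) (rowNormMax_nonneg U))
      _ = Real.sqrt ((d1 : ℝ) * d2) * (rowNormMax U * rowNormMax V) := by
          rw [Real.sqrt_mul (by positivity)]; ring
  rcases eq_or_lt_of_le (Real.sqrt_nonneg ((d1 : ℝ) * d2)) with h0 | hpos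
  · rw [← h0, div_zero]
    exact mul_nonneg (rowNormMax_nonneg U) (rowNormMax_nonneg V)
  · rw [div_le_iff₀ hpos]
    linarith [key]
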